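/- For every real r with 0 < r < 1 and every d ∈ ℕ, the (d+1)×(d+1) matrix M with entries M_{j,k} = ∑_{n=0}^∞ binom(n,j)·binom(n,k)·r^{2n} for j,k ∈ {0,…,d} (each series converges) satisfies det M = r^{−(d+1)}·(r/(1−r²))^{(d+1)²}. -/

import Mathlib

open Finset



noncomputable def gN (x : ℝ) (j k : ℕ) : ℝ :=
  ∑ i ∈ Finset.range (k+1), (j.choose i : ℝ) * (k.choose i : ℝ) * x ^ (k - i)

lemma sumS (x : ℝ) (hx0 : 0 ≤ x) (hx1 : x < 1) (j k : ℕ) :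
    Summable (fun n : ℕ => (n.choose j : ℝ) * (n.choose k : ℝ) * x ^ n) := by
  refine Summable.of_nonneg_of_le (fun n => by positivity) (fun n => ?_)
    (summable_pow_mul_geometric_of_norm_lt_one (j + k)
      (by rwa [Real.norm_of_nonneg hx0]))
  have h1 : (n.choose j : ℝ) ≤ (n : ℝ) ^ j := by exact_mod_cast Nat.choose_le_pow n j
  have h2 : (n.choose k : ℝ) ≤ (n : ℝ) ^ k := by exact_mod_cast Nat.choose_le_pow n k
  have hx : (0:ℝ) ≤ x ^ n := by positivity
  calc (n.choose j : ℝ) * (n.choose k : ℝ) * x ^ n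
      ≤ (n : ℝ) ^ j * (n : ℝ) ^ k * x ^ n := by
        apply mul_le_mul_of_nonneg_right _ hx
        exact mul_le_mul h1 h2 (by positivity) (by positivity)
    _ = (n : ℝ) ^ (j + k) * x ^ n := by rw [pow_add]



lemma g_rec (x : ℝ) (j k : ℕ) :
    gN x (j+1) (k+1) + x * gN x j k = gN x j (k+1) + x * gN x (j+1) k + gN x j k := by
  have hmul : ∀ m : ℕ, x * gN x m k
      = ∑ i ∈ range (k+1+1), (m.choose i : ℝ) * (k.choose i : ℝ) * x ^ (k+1-i) := by
    intro m
    rw [sum_range_succ, Nat.choose_succ_self]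
    simp only [Nat.cast_zero, mul_zero, zero_mul, add_zero]
    rw [gN, Finset.mul_sum]
    refine Finset.sum_congr rfl fun i hi => ?_
    have hik : i ≤ k := Nat.lt_succ_iff.mp (mem_range.mp hi)
    have h : k + 1 - i = (k - i) + 1 := by omega
    rw [h, pow_succ]; ring
  rw [hmul j, hmul (j+1)]
  show (∑ i ∈ range (k+1+1), ((j+1).choose i : ℝ) * ((k+1).choose i : ℝ) * x ^ (k+1-i))
      + (∑ i ∈ range (k+1+1), (j.choose i : ℝ) * (k.choose i : ℝ) * x ^ (k+1-i))
    = (∑ i ∈ range (k+1+1), (j.choose i : ℝ) * ((k+1).choose i : ℝ) * x ^ (k+1-i))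
      + (∑ i ∈ range (k+1+1), ((j+1).choose i : ℝ) * (k.choose i : ℝ) * x ^ (k+1-i))
      + gN x j k
  rw [Finset.sum_range_succ' (fun i => ((j+1).choose i : ℝ) * ((k+1).choose i : ℝ) * x ^ (k+1-i)) (k+1),
      Finset.sum_range_succ' (fun i => (j.choose i : ℝ) * (k.choose i : ℝ) * x ^ (k+1-i)) (k+1),
      Finset.sum_range_succ' (fun i => (j.choose i : ℝ) * ((k+1).choose i : ℝ) * x ^ (k+1-i)) (k+1),
      Finset.sum_range_succ' (fun i => ((j+1).choose i : ℝ) * (k.choose i : ℝ) * x ^ (k+1-i)) (k+1)]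
  simp only [Nat.succ_sub_succ, Nat.choose_zero_right, Nat.cast_one, one_mul, Nat.sub_zero]
  rw [gN]
  have key : ∑ i ∈ range (k+1),
        (((j+1).choose (i+1) : ℝ) * ((k+1).choose (i+1) : ℝ) * x ^ (k-i)
          + (j.choose (i+1) : ℝ) * (k.choose (i+1) : ℝ) * x ^ (k-i))
      = ∑ i ∈ range (k+1),
        ((j.choose (i+1) : ℝ) * ((k+1).choose (i+1) : ℝ) * x ^ (k-i)
          + ((j+1).choose (i+1) : ℝ) * (k.choose (i+1) : ℝ) * x ^ (k-i)
          + (j.choose i : ℝ) * (k.choose i : ℝ) * x ^ (k-i)) := by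
    refine Finset.sum_congr rfl fun i _ => ?_
    push_cast [Nat.choose_succ_succ]
    ring
  rw [Finset.sum_add_distrib] at key
  rw [Finset.sum_add_distrib, Finset.sum_add_distrib] at key
  linarith [key]



noncomputable def S (x : ℝ) (j k : ℕ) : ℝ :=
  ∑' n : ℕ, (n.choose j : ℝ) * (n.choose k : ℝ) * x ^ n

lemma S_succ_succ (x : ℝ) (hx0 : 0 ≤ x) (hx1 : x < 1) (j k : ℕ) :
    S x (j+1) (k+1) = x * S x (j+1) (k+1) + x * S x j (k+1)
      + x * S x (j+1) k + x * S x j k := by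
  have h0 : S x (j+1) (k+1)
      = ∑' n : ℕ, ((n+1).choose (j+1) : ℝ) * ((n+1).choose (k+1) : ℝ) * x ^ (n+1) := by
    rw [S, Summable.tsum_eq_zero_add (sumS x hx0 hx1 (j+1) (k+1))]
    simp [Nat.choose_eq_zero_of_lt (Nat.succ_pos j)]
  have hfun : ∀ n : ℕ, ((n+1).choose (j+1) : ℝ) * ((n+1).choose (k+1) : ℝ) * x ^ (n+1)
      = x * ((n.choose (j+1) : ℝ) * (n.choose (k+1) : ℝ) * x ^ n)
        + (x * ((n.choose j : ℝ) * (n.choose (k+1) : ℝ) * x ^ n)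
        + (x * ((n.choose (j+1) : ℝ) * (n.choose k : ℝ) * x ^ n)
        + x * ((n.choose j : ℝ) * (n.choose k : ℝ) * x ^ n))) := by
    intro n
    push_cast [Nat.choose_succ_succ]
    ring
  have s1 := (sumS x hx0 hx1 (j+1) (k+1)).mul_left x
  have s2 := (sumS x hx0 hx1 j (k+1)).mul_left x
  have s3 := (sumS x hx0 hx1 (j+1) k).mul_left x
  have s4 := (sumS x hx0 hx1 j k).mul_left x
  calc S x (j+1) (k+1)
      = ∑' n : ℕ, ((n+1).choose (j+1) : ℝ) * ((n+1).choose (k+1) : ℝ) * x ^ (n+1) := h0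
    _ = ∑' n : ℕ, (x * ((n.choose (j+1) : ℝ) * (n.choose (k+1) : ℝ) * x ^ n)
        + (x * ((n.choose j : ℝ) * (n.choose (k+1) : ℝ) * x ^ n)
        + (x * ((n.choose (j+1) : ℝ) * (n.choose k : ℝ) * x ^ n)
        + x * ((n.choose j : ℝ) * (n.choose k : ℝ) * x ^ n)))) := tsum_congr hfun
    _ = x * S x (j+1) (k+1) + x * S x j (k+1) + x * S x (j+1) k + x * S x j k := by
        rw [Summable.tsum_add s1 (s2.add (s3.add s4)), Summable.tsum_add s2 (s3.add s4), Summable.tsum_add s3 s4,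
          tsum_mul_left, tsum_mul_left, tsum_mul_left, tsum_mul_left]
        simp only [S]
        ring

lemma S_zero_succ (x : ℝ) (hx0 : 0 ≤ x) (hx1 : x < 1) (k : ℕ) :
    S x 0 (k+1) = x * S x 0 (k+1) + x * S x 0 k := by
  have h0 : S x 0 (k+1)
      = ∑' n : ℕ, ((n+1).choose 0 : ℝ) * ((n+1).choose (k+1) : ℝ) * x ^ (n+1) := by
    rw [S, Summable.tsum_eq_zero_add (sumS x hx0 hx1 0 (k+1))]
    simp [Nat.choose_eq_zero_of_lt (Nat.succ_pos k)]
  have hfun : ∀ n : ℕ, ((n+1).choose 0 : ℝ) * ((n+1).choose (k+1) : ℝ) * x ^ (n+1)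
      = x * ((n.choose 0 : ℝ) * (n.choose (k+1) : ℝ) * x ^ n)
        + x * ((n.choose 0 : ℝ) * (n.choose k : ℝ) * x ^ n) := by
    intro n
    push_cast [Nat.choose_succ_succ, Nat.choose_zero_right]
    ring
  have s1 := (sumS x hx0 hx1 0 (k+1)).mul_left x
  have s2 := (sumS x hx0 hx1 0 k).mul_left x
  calc S x 0 (k+1)
      = ∑' n : ℕ, ((n+1).choose 0 : ℝ) * ((n+1).choose (k+1) : ℝ) * x ^ (n+1) := h0
    _ = ∑' n : ℕ, (x * ((n.choose 0 : ℝ) * (n.choose (k+1) : ℝ) * x ^ n)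
        + x * ((n.choose 0 : ℝ) * (n.choose k : ℝ) * x ^ n)) := tsum_congr hfun
    _ = x * S x 0 (k+1) + x * S x 0 k := by
        rw [Summable.tsum_add s1 s2, tsum_mul_left, tsum_mul_left]
        simp only [S]

lemma S_symm (x : ℝ) (j k : ℕ) : S x j k = S x k j := by
  simp only [S]
  exact tsum_congr fun n => by ring

lemma S_zero_zero (x : ℝ) (hx0 : 0 ≤ x) (hx1 : x < 1) : S x 0 0 = (1 - x)⁻¹ := by
  rw [S]
  simp only [Nat.choose_zero_right, Nat.cast_one, one_mul]
  exact tsum_geometric_of_lt_one hx0 hx1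

lemma gN_zero (x : ℝ) (k : ℕ) : gN x 0 k = x ^ k := by
  rw [gN, Finset.sum_eq_single 0]
  · simp
  · intro i hi hne
    rcases Nat.exists_eq_succ_of_ne_zero hne with ⟨m, rfl⟩
    simp [Nat.choose_eq_zero_of_lt (Nat.succ_pos m)]
  · simp

lemma gN_k_zero (x : ℝ) (j : ℕ) : gN x j 0 = 1 := by simp [gN]

lemma S_eq (x : ℝ) (hx0 : 0 < x) (hx1 : x < 1) :
    ∀ j k : ℕ, (1 - x) ^ (j + k + 1) * S x j k = x ^ j * gN x j k := by
  have hx0' : 0 ≤ x := le_of_lt hx0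
  have h1x : (1 : ℝ) - x ≠ 0 := by intro h; nlinarith
  intro j
  induction j with
  | zero =>
    intro k
    induction k with
    | zero =>
      simp only [Nat.zero_add, pow_one, S_zero_zero x hx0' hx1, gN_k_zero, pow_zero]
      field_simp
    | succ k ihk =>
      have hrec := S_zero_succ x hx0' hx1 k
      rw [gN_zero] at ihk ⊢
      linear_combination (1-x) ^ (k+1) * hrec + x * ihk
  | succ j ihj =>
    intro k
    induction k with
    | zero =>
      have hrec : S x (j+1) 0 = x * S x (j+1) 0 + x * S x j 0 := by
        rw [S_symm x (j+1) 0, S_symm x j 0]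
        exact S_zero_succ x hx0' hx1 j
      have ihj0 := ihj 0
      rw [gN_k_zero] at ihj0 ⊢
      linear_combination (1-x) ^ (j+1) * hrec + x * ihj0
    | succ k ihk =>
      have hrec := S_succ_succ x hx0' hx1 j k
      have ih1 := ihj (k+1)
      have ih3 := ihj k
      have grec := g_rec x j k
      linear_combination (1-x) ^ (j+k+2) * hrec + x * ih1 + x * ihk
        + (x * (1-x)) * ih3 - x ^ (j+1) * grec



/-- The determinant of the moment matrix `M_{j,k} = ∑_{n≥0} C(n,j) C(n,k) r^{2n}` equals
`r^{-(d+1)} (r/(1-r²))^{(d+1)²}`. -/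
theorem stmt_12 (r : ℝ) (hr0 : 0 < r) (hr1 : r < 1) (d : ℕ)
    (M : Matrix (Fin (d + 1)) (Fin (d + 1)) ℝ)
    (hM : ∀ j k : Fin (d + 1),
      M j k = ∑' n : ℕ, (n.choose (j : ℕ) : ℝ) * (n.choose (k : ℕ) : ℝ) * r ^ (2 * n)) :
    M.det = (r ^ (d + 1))⁻¹ * (r / (1 - r ^ 2)) ^ ((d + 1) ^ 2) := by
  set x : ℝ := r ^ 2 with hxdef
  have hx0 : 0 < x := by positivity
  have hx1 : x < 1 := by nlinarith
  have hxne : x ≠ 0 := ne_of_gt hx0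
  have h1x : (1 : ℝ) - x ≠ 0 := by intro h; nlinarith
  set A : Matrix (Fin (d+1)) (Fin (d+1)) ℝ :=
    Matrix.of (fun j i : Fin (d+1) => ((j:ℕ).choose (i:ℕ) : ℝ) * (x/(1-x))^(j:ℕ)) with hAdef
  set Dm : Matrix (Fin (d+1)) (Fin (d+1)) ℝ :=
    Matrix.diagonal (fun i : Fin (d+1) => (1-x)⁻¹ * (x⁻¹)^(i:ℕ)) with hDdef
  -- the entrywise identity M = A * Dm * Aᵀ
  have hMD : M = A * Dm * A.transpose := by
    ext j k
    have hS : M j k = S x (j:ℕ) (k:ℕ) := by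
      rw [hM j k, S]
      refine tsum_congr fun n => ?_
      rw [pow_mul]
    have hSval := S_eq x hx0 hx1 (j:ℕ) (k:ℕ)
    have hMjk : M j k = x ^ (j:ℕ) * gN x (j:ℕ) (k:ℕ) / (1-x) ^ ((j:ℕ)+(k:ℕ)+1) := by
      rw [hS]
      field_simp
      linear_combination hSval
    rw [hMjk]
    have hRHS : (A * Dm * A.transpose) j k
        = ∑ i : Fin (d+1), (((j:ℕ).choose (i:ℕ) : ℝ) * (x/(1-x))^(j:ℕ))
            * ((1-x)⁻¹ * (x⁻¹)^(i:ℕ))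
            * (((k:ℕ).choose (i:ℕ) : ℝ) * (x/(1-x))^(k:ℕ)) := by
      rw [Matrix.mul_apply]
      refine Finset.sum_congr rfl fun i _ => ?_
      rw [Matrix.mul_diagonal, Matrix.transpose_apply]
      rfl
    rw [hRHS]
    have hgext : gN x (j:ℕ) (k:ℕ)
        = ∑ i ∈ range (d+1), ((j:ℕ).choose i : ℝ) * ((k:ℕ).choose i : ℝ) * x ^ ((k:ℕ) - i) := by
      rw [gN]
      apply Finset.sum_subset (range_subset_range.mpr (by omega : (k:ℕ)+1 ≤ d+1))
      intro i _ hi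
      have hki : (k:ℕ) < i := by
        simp only [mem_range] at hi
        omega
      simp [Nat.choose_eq_zero_of_lt hki]
    rw [hgext, Finset.mul_sum, Finset.sum_div,
      Fin.sum_univ_eq_sum_range (fun i => (((j:ℕ).choose i : ℝ) * (x/(1-x))^(j:ℕ))
            * ((1-x)⁻¹ * (x⁻¹)^i)
            * (((k:ℕ).choose i : ℝ) * (x/(1-x))^(k:ℕ))) (d+1)]
    refine Finset.sum_congr rfl fun i _ => ?_
    by_cases hik : i ≤ (k:ℕ)
    · obtain ⟨m, hm⟩ : ∃ m, (k:ℕ) = m + i := ⟨(k:ℕ) - i, by omega⟩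
      rw [hm]
      simp only [Nat.add_sub_cancel]
      rw [div_pow, div_pow, inv_pow]
      field_simp
      ring
    · have hki : (k:ℕ) < i := lt_of_not_ge hik
      simp [Nat.choose_eq_zero_of_lt hki]
  -- determinant computation
  rw [hMD, Matrix.det_mul, Matrix.det_mul, Matrix.det_transpose]
  have hAtri : A.BlockTriangular OrderDual.toDual := by
    intro a b hab
    have : (a:ℕ) < (b:ℕ) := hab
    simp [hAdef, Nat.choose_eq_zero_of_lt this]
  have hAdet : A.det = ∏ i : Fin (d+1), (x/(1-x))^(i:ℕ) := by
    rw [Matrix.det_of_lowerTriangular A hAtri]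
    refine Finset.prod_congr rfl fun i _ => ?_
    simp [hAdef]
  have hDdet : Dm.det = ∏ i : Fin (d+1), ((1-x)⁻¹ * (x⁻¹)^(i:ℕ)) := Matrix.det_diagonal
  rw [hAdet, hDdet]
  set T : ℕ := ∑ i ∈ range (d+1), i with hTdef
  have hp1 : (∏ i : Fin (d+1), (x/(1-x))^(i:ℕ)) = (x/(1-x))^T := by
    rw [Fin.prod_univ_eq_prod_range (fun i => (x/(1-x))^i) (d+1),
      Finset.prod_pow_eq_pow_sum]
  have hp2 : (∏ i : Fin (d+1), ((1-x)⁻¹ * (x⁻¹)^(i:ℕ)))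
      = ((1-x)⁻¹)^(d+1) * (x⁻¹)^T := by
    rw [Finset.prod_mul_distrib, Finset.prod_const,
      Fin.prod_univ_eq_prod_range (fun i => (x⁻¹)^i) (d+1),
      Finset.prod_pow_eq_pow_sum]
    simp [hTdef]
  have hT2 : T * 2 = (d+1) * d := by simpa using Finset.sum_range_id_mul_two (d+1)
  have hTsq : 2 * T + (d+1) = (d+1)^2 := by
    have h : (d+1)^2 = (d+1)*d + (d+1) := by ring
    omega
  rw [hp1, hp2, ← hTsq]
  have hrne : r ≠ 0 := ne_of_gt hr0
  rw [hxdef]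
  have h1r : (1:ℝ) - r^2 ≠ 0 := by rw [hxdef] at h1x; exact h1x
  simp only [inv_pow]
  rw [div_pow, div_pow, ← pow_mul]
  field_simp
  ring
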